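/- Let k be a field of characteristic not 2, R = k[α], R^s = k[α^2], B_s = R ⊗_{R^s} R. Then B_s is indecomposable as a graded R-bimodule when graded with deg α = 2: its graded endomorphism ring of degree 0, i.e. degree-zero R-bimodule endomorphisms of B_s, is isomorphic to k, hence is local. -/

import Mathlib

/-!
Soergel bimodules for SL₂: k a field of characteristic ≠ 2, R = k[α] (α = Polynomial.X),
R^s = k[α²] the invariants of α ↦ −α, and B_s = R ⊗_{R^s} R.
-/

open TensorProduct Polynomial

noncomputable section

variable (k : Type) [Field k]

/-- The invariant subring R^s = k[α²] ⊆ R = k[α]. -/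
def Rs : Subalgebra k (Polynomial k) := Algebra.adjoin k {(Polynomial.X : Polynomial k) ^ 2}

/-- The Soergel bimodule B_s = R ⊗_{R^s} R (as a commutative ring; the left action of R is
multiplication by f ⊗ 1 and the right action is multiplication by 1 ⊗ f). -/
abbrev Bs : Type := (Polynomial k) ⊗[Rs k] (Polynomial k)

/-- α/2 ∈ R. -/
def half : Polynomial k := Polynomial.C ((2 : k)⁻¹) * Polynomial.X

/-- Δ_s = (α/2) ⊗ 1 + 1 ⊗ (α/2) ∈ B_s. -/
def Δs : Bs k := half k ⊗ₜ[Rs k] 1 + 1 ⊗ₜ[Rs k] half k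

/-- The n-th graded piece of B_s = R ⊗_{R^s} R (1): spanned over k by the monomials
α^i ⊗ α^j, which have degree 2i + 2j − 1 (with deg α = 2 and the grading shift (1)). -/
def BsGradedPiece (n : ℤ) : Submodule k (Bs k) :=
  Submodule.span k {x : Bs k | ∃ i j : ℕ,
    x = (((Polynomial.X : Polynomial k) ^ i) ⊗ₜ[Rs k] ((Polynomial.X : Polynomial k) ^ j) : Bs k) ∧ (2 * i + 2 * j : ℤ) - 1 = n}

lemma Bs_smul_one_inj (c : k) (hc : c • (1 : Bs k) = 0) : c = 0 := by
  have h1 : c • (1 : Bs k) = (Polynomial.C c) ⊗ₜ[Rs k] (1 : Polynomial k) := by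
    rw [Algebra.TensorProduct.one_def, TensorProduct.smul_tmul']
    congr 1
    simp [Algebra.smul_def]
  rw [h1] at hc
  have := congrArg (Algebra.TensorProduct.lmul' (R := Rs k) (S := Polynomial k)) hc
  simpa [Algebra.TensorProduct.lmul'_apply_tmul] using this

lemma Bs_key (φ : Bs k →ₗ[k] Bs k)
    (hl : ∀ (f : Polynomial k) (x : Bs k),
        φ ((f ⊗ₜ[Rs k] (1 : Polynomial k)) * x) = (f ⊗ₜ[Rs k] (1 : Polynomial k)) * φ x)
    (hr : ∀ (f : Polynomial k) (x : Bs k),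
        φ (x * ((1 : Polynomial k) ⊗ₜ[Rs k] f)) = φ x * ((1 : Polynomial k) ⊗ₜ[Rs k] f))
    (hg : ∀ n : ℤ, (BsGradedPiece k n).map φ ≤ BsGradedPiece k n) :
    ∃ c : k, φ = c • LinearMap.id ∧ φ 1 = c • (1 : Bs k) := by
  have h1mem : (1 : Bs k) ∈ BsGradedPiece k (-1) := by
    apply Submodule.subset_span
    exact ⟨0, 0, by simp [Algebra.TensorProduct.one_def], by ring⟩
  have hφ1 : φ 1 ∈ BsGradedPiece k (-1) := hg (-1) ⟨1, h1mem, rfl⟩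
  have hset : {x : Bs k | ∃ i j : ℕ,
      x = (((Polynomial.X : Polynomial k) ^ i) ⊗ₜ[Rs k] ((Polynomial.X : Polynomial k) ^ j) : Bs k)
        ∧ (2 * i + 2 * j : ℤ) - 1 = -1} = {(1 : Bs k)} := by
    ext x
    constructor
    · rintro ⟨i, j, rfl, hij⟩
      have hi : i = 0 ∧ j = 0 := by omega
      simp [hi.1, hi.2, Algebra.TensorProduct.one_def]
    · rintro rfl
      exact ⟨0, 0, by simp [Algebra.TensorProduct.one_def], by ring⟩
  rw [BsGradedPiece, hset] at hφ1
  obtain ⟨c, hc⟩ := Submodule.mem_span_singleton.mp hφ1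
  refine ⟨c, ?_, hc.symm⟩
  apply LinearMap.ext
  intro x
  induction x using TensorProduct.induction_on with
  | zero => simp
  | tmul f g =>
      have e1 : (f ⊗ₜ[Rs k] g : Bs k)
          = (f ⊗ₜ[Rs k] (1 : Polynomial k)) * ((1 : Bs k) * ((1 : Polynomial k) ⊗ₜ[Rs k] g)) := by
        rw [one_mul, Algebra.TensorProduct.tmul_mul_tmul, mul_one, one_mul]
      rw [e1, hl, hr, ← hc]
      simp only [smul_mul_assoc, mul_smul_comm, one_mul, LinearMap.smul_apply, LinearMap.id_apply]
  | add x y hx hy => simp [map_add, hx, hy]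


/-- B_s is indecomposable as a graded R-bimodule: every degree-zero
R-bimodule endomorphism of B_s is a scalar in k, i.e. the degree-zero graded endomorphism
ring is isomorphic to k; hence it is local, and in particular every idempotent degree-zero
bimodule endomorphism is 0 or the identity. -/
theorem Bs_indecomposable (hchar : ringChar k ≠ 2) :
    (∀ φ : Bs k →ₗ[k] Bs k,
      (∀ (f : Polynomial k) (x : Bs k),
        φ ((f ⊗ₜ[Rs k] (1 : Polynomial k)) * x) = (f ⊗ₜ[Rs k] (1 : Polynomial k)) * φ x) →
      (∀ (f : Polynomial k) (x : Bs k),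
        φ (x * ((1 : Polynomial k) ⊗ₜ[Rs k] f)) = φ x * ((1 : Polynomial k) ⊗ₜ[Rs k] f)) →
      (∀ n : ℤ, (BsGradedPiece k n).map φ ≤ BsGradedPiece k n) →
      ∃! c : k, φ = c • LinearMap.id) ∧
    (∀ φ : Bs k →ₗ[k] Bs k,
      (∀ (f : Polynomial k) (x : Bs k),
        φ ((f ⊗ₜ[Rs k] (1 : Polynomial k)) * x) = (f ⊗ₜ[Rs k] (1 : Polynomial k)) * φ x) →
      (∀ (f : Polynomial k) (x : Bs k),
        φ (x * ((1 : Polynomial k) ⊗ₜ[Rs k] f)) = φ x * ((1 : Polynomial k) ⊗ₜ[Rs k] f)) →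
      (∀ n : ℤ, (BsGradedPiece k n).map φ ≤ BsGradedPiece k n) →
      φ.comp φ = φ → φ = 0 ∨ φ = LinearMap.id) := by
  constructor
  · intro φ hl hr hg
    obtain ⟨c, hφ, hc1⟩ := Bs_key k φ hl hr hg
    refine ⟨c, hφ, ?_⟩
    intro c' hc'
    have h1 : c' • (1 : Bs k) = c • (1 : Bs k) := by
      rw [← hc1, hc']; simp
    have : (c' - c) • (1 : Bs k) = 0 := by rw [sub_smul (M := Bs k), h1, sub_self]
    exact sub_eq_zero.mp (Bs_smul_one_inj k _ this)
  · intro φ hl hr hg hidem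
    obtain ⟨c, hφ, hc1⟩ := Bs_key k φ hl hr hg
    have h2 : φ (φ 1) = φ 1 := by rw [← LinearMap.comp_apply, hidem]
    rw [hc1, map_smul, hc1, smul_smul] at h2
    have : (c * c - c) • (1 : Bs k) = 0 := by rw [sub_smul (M := Bs k), h2, sub_self]
    have hcc : c * c - c = 0 := Bs_smul_one_inj k _ this
    have h0 : c * (c - 1) = 0 := by linear_combination hcc
    have : c = 0 ∨ c = 1 := by
      rcases mul_eq_zero.mp h0 with h | h
      · exact Or.inl h
      · exact Or.inr (sub_eq_zero.mp h)
    rcases this with h | h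
    · left; rw [hφ, h, zero_smul]
    · right; rw [hφ, h, one_smul]

end
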